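/- Let ψ : g₁ → g₂ be a Lie algebra morphism between underlying Lie algebras of Lie quasi-bialgebras G₁ and G₂, let t ∈ A(g₁*, g₁), and set t' = ψ ∘ t ∘ ψ*. Then ψ is a Lie quasi-bialgebra morphism from G₁ to G₂ if and only if ψ is a Lie quasi-bialgebra morphism from G₁^t to G₂^{t'}. -/

import Mathlib

section

/-- Twisted cocycle `ϖ^t_x = ϖ_x + ad_x ∘ t + t ∘ ad*_x`. -/
def twC {K L : Type*} [Field K] [LieRing L] [LieAlgebra K L]
    (ϖ : L → Module.Dual K L →ₗ[K] L) (t : Module.Dual K L →ₗ[K] L) :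
    L → Module.Dual K L →ₗ[K] L :=
  fun x => ϖ x + LieAlgebra.ad K L x ∘ₗ t + t ∘ₗ (LieAlgebra.ad K L x).dualMap

/-- Twisted associator pairing
`⟨ξ⊗η⊗ζ, φ^t⟩ = ⟨ξ⊗η⊗ζ, φ⟩ + Cyc_{(ξ,η,ζ)} ⟨ζ, [tξ,tη] + ϖ_{tξ} η⟩`. -/
def twA {K L : Type*} [Field K] [LieRing L] [LieAlgebra K L]
    (ϖ : L → Module.Dual K L →ₗ[K] L)
    (Φ : Module.Dual K L → Module.Dual K L → Module.Dual K L → K)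
    (t : Module.Dual K L →ₗ[K] L) :
    Module.Dual K L → Module.Dual K L → Module.Dual K L → K :=
  fun ξ η ζ =>
    Φ ξ η ζ + (ζ ⁅t ξ, t η⁆ + ζ (ϖ (t ξ) η))
      + (ξ ⁅t η, t ζ⁆ + ξ (ϖ (t η) ζ))
      + (η ⁅t ζ, t ξ⁆ + η (ϖ (t ζ) ξ))

/-- A Lie algebra morphism `ψ : g₁ → g₂` is a Lie quasi-bialgebra morphism
`G₁ → G₂` iff it is a Lie quasi-bialgebra morphism `G₁^t → G₂^{t'}`, where
`t' = ψ ∘ t ∘ ψ*`. -/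
theorem stmt_13 {K L M : Type*} [Field K] [LieRing L] [LieAlgebra K L]
    [LieRing M] [LieAlgebra K M]
    (ϖ₁ : L →ₗ[K] Module.Dual K L →ₗ[K] L)
    (Φ₁ : Module.Dual K L → Module.Dual K L → Module.Dual K L → K)
    (ϖ₂ : M →ₗ[K] Module.Dual K M →ₗ[K] M)
    (Φ₂ : Module.Dual K M → Module.Dual K M → Module.Dual K M → K)
    (ψ : L →ₗ⁅K⁆ M)
    (t : Module.Dual K L →ₗ[K] L)
    (ht : ∀ ξ η : Module.Dual K L, ξ (t η) = - η (t ξ)) :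
    ((∀ (x : L) (ξ : Module.Dual K M),
        ψ (ϖ₁ x (ψ.toLinearMap.dualMap ξ)) = ϖ₂ (ψ x) ξ)
      ∧ (∀ ξ η ζ : Module.Dual K M,
          Φ₂ ξ η ζ = Φ₁ (ψ.toLinearMap.dualMap ξ) (ψ.toLinearMap.dualMap η)
            (ψ.toLinearMap.dualMap ζ)))
    ↔
    ((∀ (x : L) (ξ : Module.Dual K M),
        ψ (twC (fun a => ϖ₁ a) t x (ψ.toLinearMap.dualMap ξ))
          = twC (fun a => ϖ₂ a)
              (ψ.toLinearMap ∘ₗ t ∘ₗ ψ.toLinearMap.dualMap) (ψ x) ξ)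
      ∧ (∀ ξ η ζ : Module.Dual K M,
          twA (fun a => ϖ₂ a) Φ₂ (ψ.toLinearMap ∘ₗ t ∘ₗ ψ.toLinearMap.dualMap) ξ η ζ
            = twA (fun a => ϖ₁ a) Φ₁ t (ψ.toLinearMap.dualMap ξ)
                (ψ.toLinearMap.dualMap η) (ψ.toLinearMap.dualMap ζ))) := by

  classical
  set d := ψ.toLinearMap.dualMap with hd
  set t' := ψ.toLinearMap ∘ₗ t ∘ₗ ψ.toLinearMap.dualMap with ht'
  -- duality compatibility: ψ* ∘ ad*(ψ x) = ad* x ∘ ψ*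
  have hdual : ∀ (x : L) (ξ : Module.Dual K M),
      d ((LieAlgebra.ad K M (ψ x)).dualMap ξ) = (LieAlgebra.ad K L x).dualMap (d ξ) := by
    intro x ξ
    ext y
    simp [d, LinearMap.dualMap_apply, LieAlgebra.ad_apply, ← LieHom.map_lie]
  have ht'app : ∀ ξ : Module.Dual K M, t' ξ = ψ (t (d ξ)) := fun ξ => rfl
  -- pointwise equivalence of cocycle conditions
  have hCiff : ∀ (x : L) (ξ : Module.Dual K M),
      (ψ (ϖ₁ x (d ξ)) = ϖ₂ (ψ x) ξ) ↔
      (ψ (twC (fun a => ϖ₁ a) t x (d ξ)) = twC (fun a => ϖ₂ a) t' (ψ x) ξ) := by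
    intro x ξ
    have e2 : ψ ⁅x, t (d ξ)⁆ = ⁅ψ x, t' ξ⁆ := by
      rw [ht'app]; exact LieHom.map_lie ψ x (t (d ξ))
    have e3 : ψ (t ((LieAlgebra.ad K L x).dualMap (d ξ)))
        = t' ((LieAlgebra.ad K M (ψ x)).dualMap ξ) := by
      rw [ht'app, hdual]
    simp only [twC, LinearMap.add_apply, LinearMap.comp_apply, LieAlgebra.ad_apply]
    rw [map_add ψ, map_add ψ, e2, e3]
    exact ⟨fun h => by rw [h], fun h => add_right_cancel (add_right_cancel h)⟩
  constructor
  · rintro ⟨hC, hA⟩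
    refine ⟨fun x ξ => (hCiff x ξ).mp (hC x ξ), ?_⟩
    intro ξ η ζ
    have key : ∀ α β γ : Module.Dual K M,
        γ ⁅t' α, t' β⁆ + γ (ϖ₂ (t' α) β)
          = (d γ) ⁅t (d α), t (d β)⁆ + (d γ) (ϖ₁ (t (d α)) (d β)) := by
      intro α β γ
      have h1 : ⁅t' α, t' β⁆ = ψ ⁅t (d α), t (d β)⁆ := by
        rw [ht'app, ht'app, LieHom.map_lie]
      have h2 : ϖ₂ (t' α) β = ψ (ϖ₁ (t (d α)) (d β)) := by
        rw [ht'app]; exact (hC (t (d α)) β).symm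
      rw [h1, h2]; rfl
    simp only [twA, hA ξ η ζ, key]
  · rintro ⟨hC', hA'⟩
    have hC : ∀ (x : L) (ξ : Module.Dual K M), ψ (ϖ₁ x (d ξ)) = ϖ₂ (ψ x) ξ :=
      fun x ξ => (hCiff x ξ).mpr (hC' x ξ)
    refine ⟨hC, ?_⟩
    intro ξ η ζ
    have key : ∀ α β γ : Module.Dual K M,
        γ ⁅t' α, t' β⁆ + γ (ϖ₂ (t' α) β)
          = (d γ) ⁅t (d α), t (d β)⁆ + (d γ) (ϖ₁ (t (d α)) (d β)) := by
      intro α β γ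
      have h1 : ⁅t' α, t' β⁆ = ψ ⁅t (d α), t (d β)⁆ := by
        rw [ht'app, ht'app, LieHom.map_lie]
      have h2 : ϖ₂ (t' α) β = ψ (ϖ₁ (t (d α)) (d β)) := by
        rw [ht'app]; exact (hC (t (d α)) β).symm
      rw [h1, h2]; rfl
    have := hA' ξ η ζ
    simp only [twA, key] at this
    exact add_right_cancel (add_right_cancel (add_right_cancel this))


end
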